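/- If two tidy and regular CRNs C1 and C2 are pathway decomposition equivalent (have the same formal basis up to trivial reactions), then they induce the same reachability relation between formal states: a formal state T is reachable from a formal state S via reactions of C1 if and only if it is reachable via reactions of C2. -/

import Mathlib

namespace CRNVerif

variable {σ : Type} [DecidableEq σ]

/-- A state is a multiset of species. -/
abbrev State (σ : Type) := Multiset σ
/-- A reaction is a pair (reactants, products) of multisets of species. -/
abbrev Reaction (σ : Type) := Multiset σ × Multiset σ
/-- A pathway is a finite sequence of reactions. -/
abbrev Pathway (σ : Type) := List (Reaction σ)

/-- Result of applying reaction `r` in state `S` (i.e. `S ⊕ r`). -/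
def applyRxn (S : State σ) (r : Reaction σ) : State σ := S - r.1 + r.2

/-- Minimal initial state of a pathway: the smallest state in which
its reactions can occur in succession. -/
def minInit : Pathway σ → State σ
  | [] => 0
  | r :: p => r.1 + (minInit p - r.2)

/-- State reached from `S` after performing all reactions of `p` in order. -/
def finalFrom (S : State σ) : Pathway σ → State σ
  | [] => S
  | r :: p => finalFrom (applyRxn S r) p

/-- The final state of a pathway (starting from its minimal initial state). -/
def finalState (p : Pathway σ) : State σ := finalFrom (minInit p) p

/-- The state `S_i` after the first `i` reactions, starting from the minimal initial state. -/
def stateAt (p : Pathway σ) (i : ℕ) : State σ := finalFrom (minInit p) (p.take i)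

/-- A state is formal if it contains only formal species (as given by `fm`). -/
def FormalState (fm : σ → Bool) (S : State σ) : Prop := ∀ x ∈ S, fm x = true

/-- `Formal(S)`: the multiset obtained by removing all intermediate species from `S`. -/
def formalPart (fm : σ → Bool) (S : State σ) : State σ := S.filter (fun x => fm x = true)

/-- A reaction is trivial if reactants equal products. -/
def TrivialRxn (r : Reaction σ) : Prop := r.1 = r.2

/-- A CRN is a (finite) set of nontrivial reactions. -/
def NontrivialRxns (C : Finset (Reaction σ)) : Prop := ∀ r ∈ C, ¬ TrivialRxn r

/-- A formal CRN contains only formal reactions. -/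
def IsFormalCRN (fm : σ → Bool) (C : Finset (Reaction σ)) : Prop :=
  ∀ r ∈ C, FormalState fm r.1 ∧ FormalState fm r.2

/-- `p` is a pathway of the CRN `C`. -/
def PathwayOf (C : Finset (Reaction σ)) (p : Pathway σ) : Prop := ∀ r ∈ p, r ∈ C

/-- `Interleave l₁ l₂ l`: `l` can be partitioned into the two (order-preserving,
not necessarily contiguous) subsequences `l₁` and `l₂`. -/
inductive Interleave {α : Type u} : List α → List α → List α → Prop
  | nil : Interleave [] [] []
  | left {a : α} {l₁ l₂ l : List α} : Interleave l₁ l₂ l → Interleave (a :: l₁) l₂ (a :: l)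
  | right {a : α} {l₁ l₂ l : List α} : Interleave l₁ l₂ l → Interleave l₁ (a :: l₂) (a :: l)

/-- `InterleaveMany qs p`: `p` is generated by interleaving the lists in `qs`. -/
inductive InterleaveMany {α : Type u} : List (List α) → List α → Prop
  | nil : InterleaveMany [] []
  | cons {q r p : List α} {qs : List (List α)} :
      Interleave q r p → InterleaveMany qs r → InterleaveMany (q :: qs) p

/-- A pathway is semiformal if its minimal initial state is formal. -/
def Semiformal (fm : σ → Bool) (p : Pathway σ) : Prop := FormalState fm (minInit p)

/-- A formal pathway: a (nonempty) pathway whose minimal initial state and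
final state are both formal. -/
def FormalPathway (fm : σ → Bool) (p : Pathway σ) : Prop :=
  p ≠ [] ∧ FormalState fm (minInit p) ∧ FormalState fm (finalState p)

/-- A formal pathway is decomposable if it can be partitioned into two nonempty
subsequences that are each formal pathways. -/
def FDecomposable (fm : σ → Bool) (p : Pathway σ) : Prop :=
  ∃ q₁ q₂, q₁ ≠ [] ∧ q₂ ≠ [] ∧ Interleave q₁ q₂ p ∧
    FormalPathway fm q₁ ∧ FormalPathway fm q₂

/-- A prime formal pathway is a formal pathway that is not decomposable. -/
def PrimePathway (fm : σ → Bool) (p : Pathway σ) : Prop :=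
  FormalPathway fm p ∧ ¬ FDecomposable fm p

/-- The formal basis: the set of (initial state, final state) pairs of prime
formal pathways of `C`. -/
def formalBasis (fm : σ → Bool) (C : Finset (Reaction σ)) : Set (Reaction σ) :=
  { r | ∃ p, PathwayOf C p ∧ PrimePathway fm p ∧ r = (minInit p, finalState p) }

/-- Two sets of reactions are equal up to addition/removal of trivial reactions. -/
def EqUpToTrivial (A B : Set (Reaction σ)) : Prop :=
  {r ∈ A | ¬ TrivialRxn r} = {r ∈ B | ¬ TrivialRxn r}

/-- The reaction at (0-based) index `j` of `p` is a turning point: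
before it only formal species of the initial state appear, from it on only formal
species of the final state appear, and at the moment the turning point fires,
no formal species are left over. -/
def TurningAt (fm : σ → Bool) (p : Pathway σ) (j : ℕ) : Prop :=
  ∃ h : j < p.length,
    (∀ i ≤ j, formalPart fm (stateAt p i) ≤ minInit p) ∧
    (∀ i, j < i → i ≤ p.length → formalPart fm (stateAt p i) ≤ finalState p) ∧
    formalPart fm (stateAt p j - (p.get ⟨j, h⟩).1) = 0

/-- A regular formal pathway: one that implements a formal reaction,
i.e. has a turning point. -/
def RegularPathway (fm : σ → Bool) (p : Pathway σ) : Prop :=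
  FormalPathway fm p ∧ ∃ j, TurningAt fm p j

/-- A CRN is regular if every prime formal pathway is regular. -/
def RegularCRN (fm : σ → Bool) (C : Finset (Reaction σ)) : Prop :=
  ∀ p, PathwayOf C p → PrimePathway fm p → RegularPathway fm p

/-- `q` is a strong closing pathway for `p` (within CRN `C`): it can occur in the
final state of `p`, consumes no formal species, and leads back to a formal state. -/
def ClosingPathway (fm : σ → Bool) (C : Finset (Reaction σ)) (p q : Pathway σ) : Prop :=
  PathwayOf C q ∧ minInit q ≤ finalState p ∧ (∀ r ∈ q, formalPart fm r.1 = 0) ∧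
  FormalState fm (finalFrom (finalState p) q)

/-- A CRN is strongly tidy if every semiformal pathway has a strong closing pathway. -/
def StronglyTidy (fm : σ → Bool) (C : Finset (Reaction σ)) : Prop :=
  ∀ p, PathwayOf C p → Semiformal fm p → ∃ q, ClosingPathway fm C p q

/-- A semiformal pathway is decomposable if it can be partitioned into two
nonempty subsequences that are each semiformal. -/
def SDecomposable (fm : σ → Bool) (p : Pathway σ) : Prop :=
  ∃ q₁ q₂, q₁ ≠ [] ∧ q₂ ≠ [] ∧ Interleave q₁ q₂ p ∧ Semiformal fm q₁ ∧ Semiformal fm q₂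

/-- The width of a pathway: the maximum size of the states it passes through. -/
def width (p : Pathway σ) : ℕ :=
  ((List.range (p.length + 1)).map (fun i => Multiset.card (stateAt p i))).foldr max 0

/-- The branching factor of a CRN. -/
def branching (C : Finset (Reaction σ)) : ℕ :=
  C.sup (fun r => max (Multiset.card r.1) (Multiset.card r.2))

/-- Formal state `T` is reachable from `S` via reactions of `C`. -/
def Reachable (C : Finset (Reaction σ)) (S T : State σ) : Prop :=
  ∃ p, PathwayOf C p ∧ minInit p ≤ S ∧ finalFrom S p = T

/-- `C` and `C'` share no intermediate species: any species occurring in both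
CRNs is formal. -/
def NoSharedIntermediates (fm : σ → Bool) (C C' : Finset (Reaction σ)) : Prop :=
  ∀ r ∈ C, ∀ r' ∈ C', ∀ x : σ, x ∈ r.1 + r.2 → x ∈ r'.1 + r'.2 → fm x = true

/-- The formal closure of a pathway: the minimal state containing the formal part
of every state along the pathway. -/
def formalClosure (fm : σ → Bool) (p : Pathway σ) : State σ :=
  ((List.range (p.length + 1)).map (fun i => formalPart fm (stateAt p i))).foldr (· ∪ ·) 0

/-- The decomposed final states of a semiformal pathway: all pairs of final
states arising from decompositions into two (nonempty) semiformal pathways. -/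
def DFS (fm : σ → Bool) (p : Pathway σ) : Set (State σ × State σ) :=
  { T | ∃ q₁ q₂, q₁ ≠ [] ∧ q₂ ≠ [] ∧ Interleave q₁ q₂ p ∧
        Semiformal fm q₁ ∧ Semiformal fm q₂ ∧ T = (finalState q₁, finalState q₂) }

/-- The minimal state containing the formal parts of all states strictly after index `j`. -/
def rfsAt (fm : σ → Bool) (p : Pathway σ) (j : ℕ) : State σ :=
  (((List.range (p.length + 1)).filter (fun i => j < i)).map
      (fun i => formalPart fm (stateAt p i))).foldr (· ∪ ·) 0

/-- The regular final states of a pathway: the minimal states `T` witnessed by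
potential turning point reactions. -/
def RFS (fm : σ → Bool) (p : Pathway σ) : Set (State σ) :=
  { T | ∃ j, ∃ h : j < p.length,
      (∀ i ≤ j, formalPart fm (stateAt p i) ≤ minInit p) ∧
      formalPart fm (stateAt p j - (p.get ⟨j, h⟩).1) = 0 ∧
      T = rfsAt fm p j }

/-- The signature of a semiformal pathway: (initial state, final state, width,
formal closure, DFS, RFS). -/
def signature (fm : σ → Bool) (p : Pathway σ) :
    State σ × State σ × ℕ × State σ × Set (State σ × State σ) × Set (State σ) :=
  (minInit p, finalState p, width p, formalClosure fm p, DFS fm p, RFS fm p)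

/-- An annotated prime pathway: exactly its chosen turning point is annotated,
with the corresponding formal basis reaction. -/
def GoodAnnotation (fm : σ → Bool) (ap : List (Reaction σ × Option (Reaction σ))) : Prop :=
  PrimePathway fm (ap.map Prod.fst) ∧
  ∃ j, TurningAt fm (ap.map Prod.fst) j ∧
    ap.map Prod.snd = (List.range ap.length).map
      (fun i => if i = j then
          some (minInit (ap.map Prod.fst), finalState (ap.map Prod.fst)) else none)

/-- `p` can be interpreted as `q`: `q` can occur in the initial state of `p`, has
the same net effect, and there is a decomposition of `p` into prime formal pathways
such that replacing a chosen turning point of each by the corresponding formal basis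
element and removing all other reactions yields `q`. -/
def Interpreted (fm : σ → Bool) (p q : Pathway σ) : Prop :=
  minInit q ≤ minInit p ∧
  finalFrom (minInit p) q = finalState p ∧
  ∃ ap : List (Reaction σ × Option (Reaction σ)),
    ap.map Prod.fst = p ∧ (ap.map Prod.snd).reduceOption = q ∧
    ∃ aps, InterleaveMany aps ap ∧ ∀ a ∈ aps, GoodAnnotation fm a


/-! ### Auxiliary lemmas -/

/-- Net effect of a pathway on species `x`, as an integer. -/
def netZ (p : Pathway σ) (x : σ) : ℤ :=
  (p.map (fun r => (Multiset.count x r.2 : ℤ) - Multiset.count x r.1)).sum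

@[simp] lemma netZ_nil (x : σ) : netZ ([] : Pathway σ) x = 0 := rfl

lemma netZ_cons (r : Reaction σ) (p : Pathway σ) (x : σ) :
    netZ (r :: p) x = ((Multiset.count x r.2 : ℤ) - Multiset.count x r.1) + netZ p x := by
  simp [netZ]

lemma count_applyRxn (S : State σ) (r : Reaction σ) (x : σ) :
    Multiset.count x (applyRxn S r) = Multiset.count x S - Multiset.count x r.1 + Multiset.count x r.2 := by
  simp [applyRxn, Multiset.count_sub]

lemma count_minInit_cons (r : Reaction σ) (p : Pathway σ) (x : σ) :
    Multiset.count x (minInit (r :: p)) =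
      Multiset.count x r.1 + (Multiset.count x (minInit p) - Multiset.count x r.2) := by
  simp [minInit, Multiset.count_sub]

lemma minInit_cons_le {r : Reaction σ} {p : Pathway σ} {S : State σ} :
    minInit (r :: p) ≤ S ↔ r.1 ≤ S ∧ minInit p ≤ applyRxn S r := by
  simp only [Multiset.le_iff_count]
  constructor
  · intro h
    constructor
    · intro x; have := h x; rw [count_minInit_cons] at this; omega
    · intro x; have := h x; rw [count_minInit_cons] at this; rw [count_applyRxn]; omega
  · rintro ⟨h1, h2⟩ x
    have := h1 x; have := h2 x; rw [count_applyRxn] at *; rw [count_minInit_cons]; omega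

lemma count_finalFrom {p : Pathway σ} {S : State σ} (h : minInit p ≤ S) (x : σ) :
    (Multiset.count x (finalFrom S p) : ℤ) = Multiset.count x S + netZ p x := by
  induction p generalizing S with
  | nil => simp [finalFrom]
  | cons r p ih =>
      rcases minInit_cons_le.mp h with ⟨h1, h2⟩
      have hr1 : Multiset.count x r.1 ≤ Multiset.count x S := Multiset.le_iff_count.mp h1 x
      rw [finalFrom, ih h2, netZ_cons]
      have := count_applyRxn S r x
      push_cast [this]
      omega

lemma count_finalState (p : Pathway σ) (x : σ) :
    (Multiset.count x (finalState p) : ℤ) = Multiset.count x (minInit p) + netZ p x :=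
  count_finalFrom le_rfl x

lemma finalFrom_eq_of_le {p : Pathway σ} {S : State σ} (h : minInit p ≤ S) :
    finalFrom S p = S - minInit p + finalState p := by
  ext x
  have h1 := count_finalFrom h x
  have h2 := count_finalState p x
  have h3 : Multiset.count x (minInit p) ≤ Multiset.count x S := Multiset.le_iff_count.mp h x
  rw [Multiset.count_add, Multiset.count_sub]
  omega

lemma minInit_take_le (p : Pathway σ) (t : ℕ) : minInit (p.take t) ≤ minInit p := by
  induction p generalizing t with
  | nil => simp
  | cons r p ih =>
      cases t with
      | zero => simp [minInit]
      | succ t =>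
          rw [List.take_succ_cons]
          rw [Multiset.le_iff_count]
          intro x
          rw [count_minInit_cons, count_minInit_cons]
          have := Multiset.le_iff_count.mp (ih t) x
          omega

lemma reactant_avail {p : Pathway σ} {S : State σ} (h : minInit p ≤ S) :
    ∀ (t : ℕ) (ht : t < p.length), (p.get ⟨t, ht⟩).1 ≤ finalFrom S (p.take t) := by
  induction p generalizing S with
  | nil => intro t ht; simp at ht
  | cons r p ih =>
      rcases minInit_cons_le.mp h with ⟨h1, h2⟩
      intro t ht
      cases t with
      | zero => simpa [finalFrom] using h1
      | succ t =>
          rw [List.take_succ_cons]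
          exact ih h2 t (by simpa using ht)

lemma finalFrom_append (S : State σ) (p q : Pathway σ) :
    finalFrom S (p ++ q) = finalFrom (finalFrom S p) q := by
  induction p generalizing S with
  | nil => rfl
  | cons r p ih => simp [finalFrom, ih]

lemma minInit_append_le {p q : Pathway σ} {S : State σ}
    (hp : minInit p ≤ S) (hq : minInit q ≤ finalFrom S p) : minInit (p ++ q) ≤ S := by
  induction p generalizing S with
  | nil => simpa [finalFrom] using hq
  | cons r p ih =>
      rcases minInit_cons_le.mp hp with ⟨h1, h2⟩
      rw [List.cons_append, minInit_cons_le]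
      exact ⟨h1, ih h2 hq⟩
lemma Interleave.length_eq {α : Type u} {q r p : List α} (h : Interleave q r p) :
    q.length + r.length = p.length := by
  induction h with
  | nil => rfl
  | left _ ih => simp [List.length_cons]; omega
  | right _ ih => simp [List.length_cons]; omega

lemma Interleave.mem_left {α : Type u} {q r p : List α} (h : Interleave q r p) :
    ∀ a ∈ q, a ∈ p := by
  induction h with
  | nil => simp
  | left _ ih => intro a ha; rcases List.mem_cons.mp ha with h' | h'
                 · simp [h']
                 · exact List.mem_cons_of_mem _ (ih a h')
  | right _ ih => intro a ha; exact List.mem_cons_of_mem _ (ih a ha)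

lemma Interleave.mem_right {α : Type u} {q r p : List α} (h : Interleave q r p) :
    ∀ a ∈ r, a ∈ p := by
  induction h with
  | nil => simp
  | left _ ih => intro a ha; exact List.mem_cons_of_mem _ (ih a ha)
  | right _ ih => intro a ha; rcases List.mem_cons.mp ha with h' | h'
                  · simp [h']
                  · exact List.mem_cons_of_mem _ (ih a h')

lemma Interleave.nil_left {α : Type u} {r p : List α} (h : Interleave [] r p) : r = p := by
  generalize hq : ([] : List α) = q at h
  induction h with
  | nil => rfl
  | left _ ih => exact absurd hq (by simp)
  | right h ih => rw [ih hq]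

lemma interleave_nil_right {α : Type u} (l : List α) : Interleave l [] l := by
  induction l with
  | nil => exact Interleave.nil
  | cons a l ih => exact Interleave.left ih

lemma interleave_assoc {α : Type u} {a b c d e : List α}
    (h1 : Interleave a b c) (h2 : Interleave c d e) :
    ∃ f, Interleave b d f ∧ Interleave a f e := by
  induction h2 generalizing a b with
  | nil =>
      cases h1
      exact ⟨[], Interleave.nil, Interleave.nil⟩
  | @left x c' d' e' _ ih =>
      cases h1 with
      | left h1' =>
          obtain ⟨f, hf1, hf2⟩ := ih h1'
          exact ⟨f, hf1, Interleave.left hf2⟩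
      | right h1' =>
          obtain ⟨f, hf1, hf2⟩ := ih h1'
          exact ⟨x :: f, Interleave.left hf1, Interleave.right hf2⟩
  | @right x c' d' e' _ ih =>
      obtain ⟨f, hf1, hf2⟩ := ih h1
      exact ⟨x :: f, Interleave.right hf1, Interleave.right hf2⟩

lemma interleaveMany_append {α : Type u} {qs₁ qs₂ : List (List α)} {q₁ q₂ p : List α}
    (h1 : InterleaveMany qs₁ q₁) (h2 : InterleaveMany qs₂ q₂) (h : Interleave q₁ q₂ p) :
    InterleaveMany (qs₁ ++ qs₂) p := by
  induction h1 generalizing p with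
  | nil =>
      have := Interleave.nil_left h
      subst this
      simpa using h2
  | @cons q r q₁' qs hqr hrest ih =>
      obtain ⟨f, hf1, hf2⟩ := interleave_assoc hqr h
      exact InterleaveMany.cons hf2 (ih hf1)

/-- Every formal pathway decomposes into prime formal pathways. -/
lemma exists_prime_decomp (fm : σ → Bool) (C : Finset (Reaction σ)) :
    ∀ (n : ℕ) (p : Pathway σ), p.length = n → PathwayOf C p → FormalPathway fm p →
      ∃ qs, InterleaveMany qs p ∧ ∀ q ∈ qs, PathwayOf C q ∧ PrimePathway fm q := by
  intro n
  induction n using Nat.strong_induction_on with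
  | _ n ih =>
  intro p hn hpC hpf
  by_cases hprime : FDecomposable fm p
  · obtain ⟨q₁, q₂, hq1ne, hq2ne, hint, hq1f, hq2f⟩ := hprime
    have hlen := hint.length_eq
    have hq1C : PathwayOf C q₁ := fun r hr => hpC r (hint.mem_left r hr)
    have hq2C : PathwayOf C q₂ := fun r hr => hpC r (hint.mem_right r hr)
    have hl1 : q₁.length < n := by
      have := List.length_pos_iff.mpr hq2ne; omega
    have hl2 : q₂.length < n := by
      have := List.length_pos_iff.mpr hq1ne; omega
    obtain ⟨qs₁, hqs₁, hqs₁'⟩ := ih q₁.length hl1 q₁ rfl hq1C hq1f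
    obtain ⟨qs₂, hqs₂, hqs₂'⟩ := ih q₂.length hl2 q₂ rfl hq2C hq2f
    refine ⟨qs₁ ++ qs₂, interleaveMany_append hqs₁ hqs₂ hint, ?_⟩
    intro q hq
    rcases List.mem_append.mp hq with h' | h'
    · exact hqs₁' q h'
    · exact hqs₂' q h'
  · exact ⟨[p], InterleaveMany.cons (interleave_nil_right p) InterleaveMany.nil,
      by rintro q hq; simp at hq; subst hq; exact ⟨hpC, hpf, hprime⟩⟩
/-- Select the elements of `p` whose label (in `L`) is `k`. -/
def sel {α : Type u} (k : ℕ) : List ℕ → List α → List α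
  | o :: L, r :: p => if o = k then r :: sel k L p else sel k L p
  | _, _ => []

@[simp] lemma sel_nil {α : Type u} (k : ℕ) (L : List ℕ) : sel k L ([] : List α) = [] := by
  cases L <;> rfl

@[simp] lemma sel_nil' {α : Type u} (k : ℕ) (p : List α) : sel k [] p = [] := by
  cases p <;> rfl

lemma sel_cons {α : Type u} (k o : ℕ) (L : List ℕ) (r : α) (p : List α) :
    sel k (o :: L) (r :: p) = if o = k then r :: sel k L p else sel k L p := rfl

lemma sel_length {α : Type u} (k : ℕ) : ∀ (L : List ℕ) (p : List α), L.length = p.length →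
    (sel k L p).length = L.count k := by
  intro L
  induction L with
  | nil => simp
  | cons o L ih =>
      intro p hp
      cases p with
      | nil => simp at hp
      | cons r p =>
          simp only [List.length_cons, Nat.succ_inj] at hp
          rw [sel_cons]
          by_cases h : o = k
          · simp [h, List.count_cons, ih p hp]
          · simp [h, List.count_cons, ih p hp, Ne.symm h]

lemma sel_take {α : Type u} (k : ℕ) : ∀ (t : ℕ) (L : List ℕ) (p : List α), L.length = p.length →
    sel k (L.take t) (p.take t) = (sel k L p).take ((L.take t).count k) := by
  intro t
  induction t with
  | zero => simp
  | succ t ih =>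
      intro L p hp
      cases L with
      | nil => simp
      | cons o L =>
          cases p with
          | nil => simp at hp
          | cons r p =>
              simp only [List.length_cons, Nat.succ_inj] at hp
              rw [List.take_succ_cons, List.take_succ_cons, sel_cons, sel_cons]
              by_cases h : o = k
              · simp [h, List.count_cons, ih L p hp]
              · simp [h, List.count_cons, ih L p hp, Ne.symm h]

lemma count_take_mono {L : List ℕ} {k : ℕ} {t t' : ℕ} (h : t ≤ t') :
    (L.take t).count k ≤ (L.take t').count k := by
  have : L.take t = (L.take t').take t := by rw [List.take_take, Nat.min_eq_left h]
  rw [this]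
  exact List.Sublist.count_le k (List.take_sublist _ _)

lemma merge_labels {α : Type u} {q r p : List α} (h : Interleave q r p) :
    ∀ (L : List ℕ), L.length = r.length →
      ∃ L' : List ℕ, L'.length = p.length ∧ sel 0 L' p = q ∧
        (∀ k, sel (k+1) L' p = sel k L r) ∧
        (∀ n, (∀ o ∈ L, o < n) → ∀ o ∈ L', o < n + 1) := by
  induction h with
  | nil => exact fun L hL => ⟨[], by simp⟩
  | @left a q' r' p' h ih =>
      intro L hL
      obtain ⟨L', h1, h2, h3, h4⟩ := ih L hL
      refine ⟨0 :: L', by simp [h1], by simp [sel_cons, h2], ?_, ?_⟩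
      · intro k; rw [sel_cons]; simp [h3 k]
      · intro n hn o ho
        rcases List.mem_cons.mp ho with rfl | ho'
        · omega
        · exact h4 n hn o ho'
  | @right a q' r' p' h ih =>
      intro L hL
      cases L with
      | nil => simp at hL
      | cons o₀ L =>
          simp only [List.length_cons, Nat.succ_inj] at hL
          obtain ⟨L', h1, h2, h3, h4⟩ := ih L hL
          refine ⟨(o₀ + 1) :: L', by simp [h1], by simp [sel_cons, h2], ?_, ?_⟩
          · intro k
            rw [sel_cons, sel_cons]
            by_cases hk : o₀ = k
            · simp [hk, h3 k]
            · simp [hk, fun hc : o₀ + 1 = k + 1 => hk (by omega), h3 k]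
          · intro n hn o ho
            rcases List.mem_cons.mp ho with rfl | ho'
            · have := hn o₀ (by simp); omega
            · exact h4 n (fun o' ho' => hn o' (by simp [ho'])) o ho'

lemma exists_labels {α : Type u} {qs : List (List α)} {p : List α} (h : InterleaveMany qs p) :
    ∃ L : List ℕ, L.length = p.length ∧ (∀ o ∈ L, o < qs.length) ∧
      ∀ (k : ℕ) (hk : k < qs.length), sel k L p = qs.get ⟨k, hk⟩ := by
  induction h with
  | nil => exact ⟨[], by simp⟩
  | @cons q r p' qs' hqr hrest ih =>
      obtain ⟨L, hL1, hL2, hL3⟩ := ih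
      have hLlen : L.length = r.length := by rw [hL1]
      obtain ⟨L', h1, h2, h3, h4⟩ := merge_labels hqr L hLlen
      refine ⟨L', h1, h4 qs'.length hL2, ?_⟩
      intro k hk
      cases k with
      | zero => simpa using h2
      | succ k =>
          rw [h3 k, hL3 k (by simpa using hk)]
          rfl
lemma netZ_sel_sum (x : σ) (n : ℕ) : ∀ (L : List ℕ) (p : Pathway σ), L.length = p.length →
    (∀ o ∈ L, o < n) → ∑ k ∈ Finset.range n, netZ (sel k L p) x = netZ p x := by
  intro L
  induction L with
  | nil =>
      intro p hp _
      cases p with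
      | nil => simp
      | cons r p => simp at hp
  | cons o L ih =>
      intro p hp hb
      cases p with
      | nil => simp at hp
      | cons r p =>
          simp only [List.length_cons, Nat.succ_inj] at hp
          have key : ∀ k, netZ (sel k (o :: L) (r :: p)) x =
              (if o = k then ((Multiset.count x r.2 : ℤ) - Multiset.count x r.1) else 0)
                + netZ (sel k L p) x := by
            intro k
            rw [sel_cons]
            by_cases h : o = k <;> simp [h, netZ_cons]
          rw [netZ_cons]
          rw [Finset.sum_congr rfl (fun k _ => key k), Finset.sum_add_distrib,
            Finset.sum_ite_eq, if_pos (Finset.mem_range.mpr (hb o (by simp))),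
            ih p hp (fun o' ho' => hb o' (by simp [ho']))]

lemma exists_global_index {α : Type u} : ∀ (L : List ℕ) (p : List α), L.length = p.length →
    ∀ (k j : ℕ), j < (sel k L p).length →
    ∃ (t : ℕ), t < p.length ∧ (L.take t).count k = j ∧ L[t]? = some k ∧
      p[t]? = (sel k L p)[j]? := by
  intro L
  induction L with
  | nil => intro p hp k j hj; simp at hj
  | cons o L ih =>
      intro p hp k j hj
      cases p with
      | nil => simp at hp
      | cons r p =>
          simp only [List.length_cons, Nat.succ_inj] at hp
          by_cases h : o = k
          · subst h
            have heq : sel o (o :: L) (r :: p) = r :: sel o L p := by simp [sel_cons]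
            cases j with
            | zero => exact ⟨0, by simp, by simp, by simp, by simp [heq]⟩
            | succ j =>
                have hj' : j < (sel o L p).length := by rw [heq] at hj; simpa using hj
                obtain ⟨t, ht, h1, h2, h3⟩ := ih p hp o j hj'
                refine ⟨t + 1, by simpa using ht, ?_, by simpa using h2, ?_⟩
                · simp [List.count_cons, h1]
                · simpa [heq] using h3
          · have heq : sel k (o :: L) (r :: p) = sel k L p := by simp [sel_cons, h]
            have hj' : j < (sel k L p).length := by rw [heq] at hj; exact hj
            obtain ⟨t, ht, h1, h2, h3⟩ := ih p hp k j hj'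
            refine ⟨t + 1, by simpa using ht, ?_, by simpa using h2, ?_⟩
            · simp [List.count_cons, h1, h]
            · simpa [heq] using h3

lemma count_take_succ_of_get {L : List ℕ} {t k : ℕ} (h : L[t]? = some k) :
    (L.take (t + 1)).count k = (L.take t).count k + 1 := by
  rw [List.take_succ]
  simp [h, List.count_append]
lemma count_formalPart {fm : σ → Bool} {X : State σ} {x : σ} (hx : fm x = true) :
    Multiset.count x (formalPart fm X) = Multiset.count x X := by
  simp [formalPart, Multiset.count_filter, hx]

lemma count_eq_zero_of_not_formal {fm : σ → Bool} {X : State σ} (hX : FormalState fm X)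
    {x : σ} (hx : ¬ fm x = true) : Multiset.count x X = 0 := by
  by_contra h
  exact hx (hX x (by rwa [← Multiset.count_pos, Nat.pos_iff_ne_zero]))

lemma count_stateAt (q : Pathway σ) (i : ℕ) (x : σ) :
    (Multiset.count x (stateAt q i) : ℤ) = Multiset.count x (minInit q) + netZ (q.take i) x :=
  count_finalFrom (minInit_take_le q i) x

/-- The crux: the formal reactions of the primes of a decomposition, fired in the
order of their turning points, form a pathway that can occur in `S`. -/
lemma run_primes (fm : σ → Bool) (p : Pathway σ) (L : List ℕ) (n : ℕ) (S : State σ)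
    (hLlen : L.length = p.length) (hLb : ∀ o ∈ L, o < n) (hS : minInit p ≤ S)
    (hform : ∀ k, k < n → FormalPathway fm (sel k L p))
    (j : ℕ → ℕ) (hj : ∀ k, k < n → TurningAt fm (sel k L p) (j k)) :
    ∃ w : Pathway σ,
      (∀ r ∈ w, ∃ k, k < n ∧ r = (minInit (sel k L p), finalState (sel k L p)))
      ∧ minInit w ≤ S ∧
      ∀ x, (Multiset.count x (finalFrom S w) : ℤ) = Multiset.count x S + netZ p x := by
  classical
  -- global times of turning points
  have hglob : ∀ k, ∃ tk, k < n →
      tk < p.length ∧ (L.take tk).count k = j k ∧ L[tk]? = some k ∧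
        p[tk]? = (sel k L p)[j k]? := by
    intro k
    by_cases hk : k < n
    · obtain ⟨hjlen, -⟩ := hj k hk
      obtain ⟨tk, h1, h2, h3, h4⟩ := exists_global_index L p hLlen k (j k) hjlen
      exact ⟨tk, fun _ => ⟨h1, h2, h3, h4⟩⟩
    · exact ⟨0, fun hk' => absurd hk' hk⟩
  choose t ht using hglob
  have tdist : ∀ k k', k < n → k' < n → k ≠ k' → t k ≠ t k' := by
    intro k k' hk hk' hne he
    have h1 := (ht k hk).2.2.1
    have h2 := (ht k' hk').2.2.1
    rw [he, h2] at h1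
    exact hne (Option.some_injective _ h1).symm
  -- main recursion over the set of remaining primes
  have main : ∀ (m : ℕ) (R : Finset ℕ), R.card = m → R ⊆ Finset.range n →
      (∀ d ∈ Finset.range n, d ∉ R → ∀ k ∈ R, t d < t k) →
      ∀ S' : State σ,
        (∀ x, (Multiset.count x S' : ℤ) =
          Multiset.count x S + ∑ k ∈ Finset.range n \ R, netZ (sel k L p) x) →
      ∃ w, (∀ r ∈ w, ∃ k ∈ R, r = (minInit (sel k L p), finalState (sel k L p))) ∧
        minInit w ≤ S' ∧
        ∀ x, (Multiset.count x (finalFrom S' w) : ℤ) =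
          Multiset.count x S' + ∑ k ∈ R, netZ (sel k L p) x := by
    intro m
    induction m with
    | zero =>
        intro R hcard _ _ S' hS'
        rw [Finset.card_eq_zero] at hcard
        subst hcard
        exact ⟨[], by simp, Multiset.zero_le _, by simp [finalFrom]⟩
    | succ m ihm =>
        intro R hcard hRsub hinv S' hS'
        have hRne : R.Nonempty := Finset.card_pos.mp (by omega)
        obtain ⟨k0, hk0R, hk0min⟩ := Finset.exists_min_image R t hRne
        have hk0n : k0 < n := Finset.mem_range.mp (hRsub hk0R)
        obtain ⟨hj0len, c1₀, c2₀, c3₀⟩ := hj k0 hk0n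
        obtain ⟨hT, hcT, hgetT, hpgetT⟩ := ht k0 hk0n
        -- the reaction at the turning point of k0, seen globally and locally
        have hreact : p.get ⟨t k0, hT⟩ = (sel k0 L p).get ⟨j k0, hj0len⟩ := by
          have h1 : p[t k0]? = some (p.get ⟨t k0, hT⟩) := by simp [hT]
          have h2 : (sel k0 L p)[j k0]? =
              some ((sel k0 L p).get ⟨j k0, hj0len⟩) := by simp [hj0len]
          rw [h1, h2] at hpgetT
          exact Option.some_injective _ hpgetT
        -- KEY CLAIM: the formal reaction of k0 is applicable in S'
        have key : minInit (sel k0 L p) ≤ S' := by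
          rw [Multiset.le_iff_count]
          intro x
          by_cases hfx : fm x = true
          · suffices hZ : (Multiset.count x (minInit (sel k0 L p)) : ℤ) ≤
                Multiset.count x S' by exact_mod_cast hZ
            -- availability of the turning reaction in the run of p from S
            have havail : (Multiset.count x (p.get ⟨t k0, hT⟩).1 : ℤ) ≤
                Multiset.count x S + ∑ k ∈ Finset.range n,
                  netZ ((sel k L p).take ((L.take (t k0)).count k)) x := by
              have h0 : (Multiset.count x (p.get ⟨t k0, hT⟩).1 : ℤ) ≤
                  Multiset.count x (finalFrom S (p.take (t k0))) := by
                exact_mod_cast Multiset.le_iff_count.mp (reactant_avail hS (t k0) hT) x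
              have h1 : (Multiset.count x (finalFrom S (p.take (t k0))) : ℤ) =
                  Multiset.count x S + netZ (p.take (t k0)) x :=
                count_finalFrom (le_trans (minInit_take_le p (t k0)) hS) x
              have h2 : ∑ k ∈ Finset.range n, netZ (sel k (L.take (t k0)) (p.take (t k0))) x =
                  netZ (p.take (t k0)) x := by
                refine netZ_sel_sum x n (L.take (t k0)) (p.take (t k0)) ?_ ?_
                · simp [List.length_take, hLlen]
                · exact fun o ho => hLb o (List.take_subset _ _ ho)
              rw [Finset.sum_congr rfl (fun k _ => by rw [sel_take k (t k0) L p hLlen])] at h2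
              rw [← h2] at h1
              omega
            -- (c): turning condition iii for k0
            have hk0bound : (Multiset.count x (minInit (sel k0 L p)) : ℤ) +
                netZ ((sel k0 L p).take ((L.take (t k0)).count k0)) x ≤
                Multiset.count x (p.get ⟨t k0, hT⟩).1 := by
              have h0 : Multiset.count x (formalPart fm
                  (stateAt (sel k0 L p) (j k0) - ((sel k0 L p).get ⟨j k0, hj0len⟩).1)) = 0 := by
                rw [c3₀]; simp
              rw [count_formalPart hfx, Multiset.count_sub] at h0
              have h2 := count_stateAt (sel k0 L p) (j k0) x
              rw [hreact, hcT]
              omega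
            -- (a): not-yet-turned primes
            have hnotyet : ∀ k ∈ R.erase k0,
                netZ ((sel k L p).take ((L.take (t k0)).count k)) x ≤ 0 := by
              intro k hk
              have hkR : k ∈ R := Finset.mem_of_mem_erase hk
              have hkn : k < n := Finset.mem_range.mp (hRsub hkR)
              have hkne : k ≠ k0 := Finset.ne_of_mem_erase hk
              have hTlt : t k0 < t k := by
                have hle := hk0min k hkR
                have hne := tdist k0 k hk0n hkn (Ne.symm hkne)
                omega
              have hckjk : (L.take (t k0)).count k ≤ j k := by
                have h' := count_take_mono (L := L) (k := k) (Nat.le_of_lt hTlt)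
                rw [(ht k hkn).2.1] at h'
                exact h'
              obtain ⟨hjklen, c1, -, -⟩ := hj k hkn
              have hle := Multiset.le_iff_count.mp (c1 _ hckjk) x
              rw [count_formalPart hfx] at hle
              have h2 := count_stateAt (sel k L p) ((L.take (t k0)).count k) x
              omega
            -- (b): already-turned primes
            have hdone : ∀ k ∈ Finset.range n \ R,
                netZ ((sel k L p).take ((L.take (t k0)).count k)) x ≤ netZ (sel k L p) x := by
              intro k hk
              obtain ⟨hkrange, hkR⟩ := Finset.mem_sdiff.mp hk
              have hkn : k < n := Finset.mem_range.mp hkrange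
              have htklt : t k < t k0 := hinv k hkrange hkR k0 hk0R
              have hcge : j k + 1 ≤ (L.take (t k0)).count k := by
                have h1 : (L.take (t k + 1)).count k = (L.take (t k)).count k + 1 :=
                  count_take_succ_of_get (ht k hkn).2.2.1
                have h2 := count_take_mono (L := L) (k := k) (Nat.succ_le_of_lt htklt)
                rw [h1, (ht k hkn).2.1] at h2
                omega
              have hcle : (L.take (t k0)).count k ≤ (sel k L p).length := by
                rw [sel_length k L p hLlen]
                exact List.Sublist.count_le k (List.take_sublist _ _)
              obtain ⟨hjklen, -, c2, -⟩ := hj k hkn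
              have hle := Multiset.le_iff_count.mp (c2 _ hcge hcle) x
              rw [count_formalPart hfx] at hle
              have h2 := count_stateAt (sel k L p) ((L.take (t k0)).count k) x
              have h3 := count_finalState (sel k L p) x
              omega
            -- assemble
            have split : (∑ k ∈ Finset.range n \ R,
                  netZ ((sel k L p).take ((L.take (t k0)).count k)) x) +
                ∑ k ∈ R, netZ ((sel k L p).take ((L.take (t k0)).count k)) x =
                ∑ k ∈ Finset.range n, netZ ((sel k L p).take ((L.take (t k0)).count k)) x :=
              Finset.sum_sdiff hRsub
            have split2 : (∑ k ∈ R.erase k0,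
                  netZ ((sel k L p).take ((L.take (t k0)).count k)) x) +
                netZ ((sel k0 L p).take ((L.take (t k0)).count k0)) x =
                ∑ k ∈ R, netZ ((sel k L p).take ((L.take (t k0)).count k)) x :=
              Finset.sum_erase_add _ _ hk0R
            have b3 : ∑ k ∈ R.erase k0,
                netZ ((sel k L p).take ((L.take (t k0)).count k)) x ≤ 0 :=
              Finset.sum_nonpos hnotyet
            have b4 : ∑ k ∈ Finset.range n \ R,
                  netZ ((sel k L p).take ((L.take (t k0)).count k)) x ≤
                ∑ k ∈ Finset.range n \ R, netZ (sel k L p) x := Finset.sum_le_sum hdone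
            have hS'x := hS' x
            linarith
          · have h0 : Multiset.count x (minInit (sel k0 L p)) = 0 :=
              count_eq_zero_of_not_formal (hform k0 hk0n).2.1 hfx
            simp [h0]
        -- recurse on the remaining primes
        have hS'' : ∀ x,
            (Multiset.count x (applyRxn S' (minInit (sel k0 L p), finalState (sel k0 L p))) : ℤ) =
            Multiset.count x S + ∑ k ∈ Finset.range n \ R.erase k0, netZ (sel k L p) x := by
          intro x
          have h1 : Multiset.count x (applyRxn S' (minInit (sel k0 L p), finalState (sel k0 L p)))
              = Multiset.count x S' - Multiset.count x (minInit (sel k0 L p))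
                + Multiset.count x (finalState (sel k0 L p)) :=
            count_applyRxn S' _ x
          have h2 := Multiset.le_iff_count.mp key x
          have h3 := count_finalState (sel k0 L p) x
          have h4 := hS' x
          have h5 : ∑ k ∈ Finset.range n \ R.erase k0, netZ (sel k L p) x =
              ∑ k ∈ Finset.range n, netZ (sel k L p) x -
                ∑ k ∈ R.erase k0, netZ (sel k L p) x :=
            Finset.sum_sdiff_eq_sub (fun a ha => hRsub (Finset.mem_of_mem_erase ha))
          have h6 : ∑ k ∈ Finset.range n \ R, netZ (sel k L p) x =
              ∑ k ∈ Finset.range n, netZ (sel k L p) x - ∑ k ∈ R, netZ (sel k L p) x :=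
            Finset.sum_sdiff_eq_sub hRsub
          have h7 : (∑ k ∈ R.erase k0, netZ (sel k L p) x) + netZ (sel k0 L p) x =
              ∑ k ∈ R, netZ (sel k L p) x := Finset.sum_erase_add _ _ hk0R
          omega
        have hcard' : (R.erase k0).card = m := by
          rw [Finset.card_erase_of_mem hk0R, hcard]
          omega
        have hsub' : R.erase k0 ⊆ Finset.range n :=
          fun a ha => hRsub (Finset.mem_of_mem_erase ha)
        have hinv' : ∀ d ∈ Finset.range n, d ∉ R.erase k0 → ∀ k ∈ R.erase k0, t d < t k := by
          intro d hd hdR k hk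
          have hkR : k ∈ R := Finset.mem_of_mem_erase hk
          have hkn : k < n := Finset.mem_range.mp (hRsub hkR)
          by_cases hdR' : d ∈ R
          · have hdk0 : d = k0 := by
              by_contra hne
              exact hdR (Finset.mem_erase.mpr ⟨hne, hdR'⟩)
            subst hdk0
            have hle := hk0min k hkR
            have hne := tdist d k (Finset.mem_range.mp hd) hkn (Ne.symm (Finset.ne_of_mem_erase hk))
            omega
          · exact hinv d hd hdR' k hkR
        obtain ⟨w', hw'mem, hw'min, hw'count⟩ := ihm (R.erase k0) hcard' hsub' hinv' _ hS''
        refine ⟨(minInit (sel k0 L p), finalState (sel k0 L p)) :: w', ?_, ?_, ?_⟩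
        · intro r hr
          rcases List.mem_cons.mp hr with rfl | hr'
          · exact ⟨k0, hk0R, rfl⟩
          · obtain ⟨k, hk, hkeq⟩ := hw'mem r hr'
            exact ⟨k, Finset.mem_of_mem_erase hk, hkeq⟩
        · exact minInit_cons_le.mpr ⟨key, hw'min⟩
        · intro x
          have h0 : finalFrom S' ((minInit (sel k0 L p), finalState (sel k0 L p)) :: w') =
              finalFrom (applyRxn S' (minInit (sel k0 L p), finalState (sel k0 L p))) w' := rfl
          rw [h0, hw'count x]
          have h1 : Multiset.count x (applyRxn S' (minInit (sel k0 L p), finalState (sel k0 L p)))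
              = Multiset.count x S' - Multiset.count x (minInit (sel k0 L p))
                + Multiset.count x (finalState (sel k0 L p)) :=
            count_applyRxn S' _ x
          have h2 := Multiset.le_iff_count.mp key x
          have h3 := count_finalState (sel k0 L p) x
          have h7 : (∑ k ∈ R.erase k0, netZ (sel k L p) x) + netZ (sel k0 L p) x =
              ∑ k ∈ R, netZ (sel k L p) x := Finset.sum_erase_add _ _ hk0R
          omega
  obtain ⟨w, hwmem, hwmin, hwcount⟩ := main (Finset.range n).card (Finset.range n) rfl
    (le_refl _)
    (by intro d hd hdR; exact absurd hd hdR)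
    S (by intro x; simp)
  refine ⟨w, ?_, hwmin, ?_⟩
  · intro r hr
    obtain ⟨k, hk, hkeq⟩ := hwmem r hr
    exact ⟨k, Finset.mem_range.mp hk, hkeq⟩
  · intro x
    rw [hwcount x, netZ_sel_sum x n L p hLlen hLb]
/-- Realize a pathway of formal reactions, each trivial or realizable in `C₂`,
by an actual pathway of `C₂`. -/
lemma realize (C₂ : Finset (Reaction σ)) :
    ∀ (w : Pathway σ),
      (∀ r ∈ w, TrivialRxn r ∨ ∃ v, PathwayOf C₂ v ∧ minInit v = r.1 ∧ finalState v = r.2) →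
      ∀ S, minInit w ≤ S →
      ∃ v, PathwayOf C₂ v ∧ minInit v ≤ S ∧ finalFrom S v = finalFrom S w := by
  intro w
  induction w with
  | nil => exact fun _ S _ => ⟨[], by simp [PathwayOf], Multiset.zero_le _, rfl⟩
  | cons r w ih =>
      intro hmem S hle
      obtain ⟨h1, h2⟩ := minInit_cons_le.mp hle
      have hw : ∀ r' ∈ w, TrivialRxn r' ∨
          ∃ v, PathwayOf C₂ v ∧ minInit v = r'.1 ∧ finalState v = r'.2 :=
        fun r' hr' => hmem r' (List.mem_cons_of_mem _ hr')
      rcases hmem r (List.mem_cons_self) with htriv | ⟨v0, hv0C, hv0i, hv0f⟩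
      · have happ : applyRxn S r = S := by
          ext x
          have := Multiset.le_iff_count.mp h1 x
          rw [count_applyRxn, ← htriv]
          omega
        obtain ⟨v, hvC, hvle, hveq⟩ := ih hw S (by rwa [happ] at h2)
        refine ⟨v, hvC, hvle, ?_⟩
        show finalFrom S v = finalFrom (applyRxn S r) w
        rw [happ, hveq]
      · have h1' : minInit v0 ≤ S := by rwa [hv0i]
        have hfv0 : finalFrom S v0 = applyRxn S r := by
          rw [finalFrom_eq_of_le h1', hv0i, hv0f]
          rfl
        obtain ⟨v, hvC, hvle, hveq⟩ := ih hw (applyRxn S r) h2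
        refine ⟨v0 ++ v, ?_, ?_, ?_⟩
        · intro r' hr'
          rcases List.mem_append.mp hr' with h' | h'
          · exact hv0C r' h'
          · exact hvC r' h'
        · exact minInit_append_le h1' (by rwa [hfv0])
        · rw [finalFrom_append, hfv0, hveq]
          rfl

/-- One direction of the main theorem. -/
lemma reach_transfer (fm : σ → Bool) (C₁ C₂ : Finset (Reaction σ))
    (hr₁ : RegularCRN fm C₁)
    (hsub : ∀ r, r ∈ formalBasis fm C₁ → ¬ TrivialRxn r → r ∈ formalBasis fm C₂) :
    ∀ S T : State σ, FormalState fm S → FormalState fm T →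
      Reachable C₁ S T → Reachable C₂ S T := by
  intro S T hS hT ⟨p, hpC, hpmin, hpfin⟩
  by_cases hpnil : p = []
  · subst hpnil
    exact ⟨[], by simp [PathwayOf], Multiset.zero_le _, hpfin⟩
  · have hpf : FormalPathway fm p := by
      refine ⟨hpnil, ?_, ?_⟩
      · exact fun x hx => hS x (Multiset.mem_of_le hpmin hx)
      · intro x hx
        refine hT x (Multiset.mem_of_le ?_ hx)
        rw [← hpfin, finalFrom_eq_of_le hpmin]
        exact le_add_self
    obtain ⟨qs, hqsI, hqs⟩ := exists_prime_decomp fm C₁ p.length p rfl hpC hpf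
    obtain ⟨L, hL1, hL2, hL3⟩ := exists_labels hqsI
    have hform : ∀ k, k < qs.length → FormalPathway fm (sel k L p) := by
      intro k hk
      rw [hL3 k hk]
      exact (hqs _ (List.get_mem qs ⟨k, hk⟩)).2.1
    have hturn : ∀ k, ∃ jk, k < qs.length → TurningAt fm (sel k L p) jk := by
      intro k
      by_cases hk : k < qs.length
      · have hq := hqs _ (List.get_mem qs ⟨k, hk⟩)
        obtain ⟨-, jk, hjk⟩ := hr₁ _ hq.1 hq.2
        exact ⟨jk, fun _ => by rwa [hL3 k hk]⟩
      · exact ⟨0, fun hk' => absurd hk' hk⟩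
    choose jf hjf using hturn
    obtain ⟨w, hwmem, hwmin, hwcount⟩ := run_primes fm p L qs.length S hL1 hL2 hpmin hform
      jf (fun k hk => hjf k hk)
    have hwfin : finalFrom S w = T := by
      ext x
      have h1 := hwcount x
      have h2 : (Multiset.count x T : ℤ) = Multiset.count x S + netZ p x := by
        rw [← hpfin]
        exact count_finalFrom hpmin x
      exact_mod_cast h1.trans h2.symm
    have hreal : ∀ r ∈ w, TrivialRxn r ∨
        ∃ v, PathwayOf C₂ v ∧ minInit v = r.1 ∧ finalState v = r.2 := by
      intro r hr
      obtain ⟨k, hk, rfl⟩ := hwmem r hr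
      by_cases htriv : TrivialRxn (minInit (sel k L p), finalState (sel k L p))
      · exact Or.inl htriv
      · have hq := hqs _ (List.get_mem qs ⟨k, hk⟩)
        have hbasis : (minInit (sel k L p), finalState (sel k L p)) ∈ formalBasis fm C₁ := by
          refine ⟨sel k L p, ?_, ?_, rfl⟩
          · rw [hL3 k hk]; exact hq.1
          · rw [hL3 k hk]; exact hq.2
        obtain ⟨v, hvC, hvp, hveq⟩ := hsub _ hbasis htriv
        refine Or.inr ⟨v, hvC, ?_, ?_⟩
        · rw [hveq]
        · rw [hveq]
    obtain ⟨v, hvC, hvle, hveq⟩ := realize C₂ w hreal S hwmin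
    exact ⟨v, hvC, hvle, hveq.trans hwfin⟩
/-- Pathway decomposition equivalent tidy and regular CRNs induce the same
reachability relation between formal states. -/
theorem pd_equiv_implies_same_reachability {σ : Type} [DecidableEq σ] (fm : σ → Bool)
    (C₁ C₂ : Finset (Reaction σ))
    (hC₁ : NontrivialRxns C₁) (ht₁ : StronglyTidy fm C₁) (hr₁ : RegularCRN fm C₁)
    (hC₂ : NontrivialRxns C₂) (ht₂ : StronglyTidy fm C₂) (hr₂ : RegularCRN fm C₂)
    (heq : EqUpToTrivial (formalBasis fm C₁) (formalBasis fm C₂)) :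
    ∀ S T : State σ, FormalState fm S → FormalState fm T →
      (Reachable C₁ S T ↔ Reachable C₂ S T) := by
  have heq' : {r ∈ formalBasis fm C₁ | ¬ TrivialRxn r} =
      {r ∈ formalBasis fm C₂ | ¬ TrivialRxn r} := heq
  have hsub₁ : ∀ r, r ∈ formalBasis fm C₁ → ¬ TrivialRxn r → r ∈ formalBasis fm C₂ := by
    intro r hr hnt
    have : r ∈ {r ∈ formalBasis fm C₁ | ¬ TrivialRxn r} := ⟨hr, hnt⟩
    rw [heq'] at this
    exact this.1
  have hsub₂ : ∀ r, r ∈ formalBasis fm C₂ → ¬ TrivialRxn r → r ∈ formalBasis fm C₁ := by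
    intro r hr hnt
    have : r ∈ {r ∈ formalBasis fm C₂ | ¬ TrivialRxn r} := ⟨hr, hnt⟩
    rw [← heq'] at this
    exact this.1
  intro S T hS hT
  exact ⟨reach_transfer fm C₁ C₂ hr₁ hsub₁ S T hS hT,
    reach_transfer fm C₂ C₁ hr₂ hsub₂ S T hS hT⟩

end CRNVerif
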